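/- Let n be a positive integer and λ an infinite cardinal. Every shift-continuous semiregular feebly compact T₁ topology τ on I_λ^n is compact. -/

import Mathlib

open Set Topology

universe v

namespace ISemi

/-- The set of partial injective transformations (partial bijections) of `ι`
with rank (cardinality of the range, equivalently of the domain) at most `n`. -/
def Elem (ι : Type*) (n : ℕ) : Type _ :=
  {f : ι ≃. ι // {a : ι | (f a).isSome}.encard ≤ (n : ℕ∞)}

variable {ι : Type*} {n : ℕ}

/-- Composition of partial bijections (written multiplicatively). -/
instance : Semigroup (Elem ι n) where
  mul f g := ⟨f.1.trans g.1, by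
    refine le_trans (Set.encard_mono ?_) f.2
    intro a ha
    simp only [Set.mem_setOf_eq] at *
    rcases Option.isSome_iff_exists.1 ha with ⟨c, hc⟩
    rcases (PEquiv.trans_eq_some _ _ _ _).1 hc with ⟨b, hb, -⟩
    simp [hb]⟩
  mul_assoc f g h := Subtype.ext (PEquiv.trans_assoc f.1 g.1 h.1)

/-- The inverse partial bijection. -/
def inv (f : Elem ι n) : Elem ι n := ⟨f.1.symm, by
  have key : ∀ (g : ι ≃. ι), {b : ι | (g.symm b).isSome} ⊆
      (fun p : {a : ι | (g a).isSome} => (g p.1).get p.2) '' Set.univ := by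
    intro g b hb
    rcases Option.isSome_iff_exists.1 hb with ⟨a, ha⟩
    have ha' : b ∈ g a := (PEquiv.mem_iff_mem g).1 (Option.mem_def.2 ha)
    simp only [Option.mem_def] at ha'
    refine ⟨⟨a, ?_⟩, Set.mem_univ _, ?_⟩
    · simp [Set.mem_setOf_eq, ha']
    · simp [ha']
  calc {b : ι | (f.1.symm b).isSome}.encard
      ≤ ((fun p : {a : ι | (f.1 a).isSome} => (f.1 p.1).get p.2) '' Set.univ).encard :=
        Set.encard_mono (key f.1)
    _ ≤ (Set.univ : Set {a : ι | (f.1 a).isSome}).encard := Set.encard_image_le _ _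
    _ = {a : ι | (f.1 a).isSome}.encard := by rw [Set.encard_univ, ENat.card_coe_set_eq]
    _ ≤ (n : ℕ∞) := f.2⟩

/-- The zero (the empty partial map). -/
def zero (ι : Type*) (n : ℕ) : Elem ι n := ⟨⊥, by simp [PEquiv.bot_apply]⟩

/-- idempotents -/
def IsIdem (e : Elem ι n) : Prop := e * e = e

/-- The natural partial order on the inverse semigroup `Elem ι n`:
`f ≼ g` iff `f = e * g` for some idempotent `e`. -/
def nle (f g : Elem ι n) : Prop := ∃ e : Elem ι n, IsIdem e ∧ f = e * g

/-- up-set of `f` w.r.t. the natural partial order -/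
def upset (f : Elem ι n) : Set (Elem ι n) := {g | nle f g}

/-- the rank of a partial bijection: the cardinality of its domain (= range) -/
noncomputable def rank (f : Elem ι n) : ℕ∞ := {a : ι | (f.1 a).isSome}.encard

def dom (f : Elem ι n) : Set ι := {a : ι | (f.1 a).isSome}

def ran (f : Elem ι n) : Set ι := {b : ι | (f.1.symm b).isSome}

/-- A topology on `Elem ι n` is shift-continuous if all left and right
translations are continuous. -/
def ShiftContinuous (ι : Type*) (n : ℕ) [TopologicalSpace (Elem ι n)] : Prop :=
  ∀ a : Elem ι n, Continuous (fun x : Elem ι n => a * x) ∧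
    Continuous (fun x : Elem ι n => x * a)

/-- A space is feebly compact if every locally finite family of nonempty open
sets is finite. -/
def FeeblyCompact (X : Type*) [TopologicalSpace X] : Prop :=
  ∀ 𝒰 : Set (Set X), (∀ U ∈ 𝒰, IsOpen U ∧ U.Nonempty) →
    LocallyFinite (fun U : 𝒰 => (U : Set X)) → 𝒰.Finite

/-- A space is `d`-feebly compact if every discrete family of open sets is
finite; a family is discrete if every point has a neighbourhood meeting at
most one member of the family. -/
def DFeeblyCompact (X : Type*) [TopologicalSpace X] : Prop :=
  ∀ 𝒰 : Set (Set X), (∀ U ∈ 𝒰, IsOpen U) →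
    (∀ x : X, ∃ V ∈ 𝓝 x, {U ∈ 𝒰 | (U ∩ V).Nonempty}.Subsingleton) → 𝒰.Finite

/-- countably pracompact: there is a dense set `A` such that every infinite
subset of `A` has an accumulation point in `X`. -/
def CountablyPracompact (X : Type*) [TopologicalSpace X] : Prop :=
  ∃ A : Set X, Dense A ∧ ∀ B ⊆ A, B.Infinite → ∃ x : X, AccPt x (Filter.principal B)

/-- H-closed: closed in every Hausdorff space in which it embeds. -/
def HClosed (X : Type*) [TopologicalSpace X] : Prop :=
  ∀ (Y : Type v) (_ : TopologicalSpace Y), T2Space Y →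
    ∀ e : X → Y, IsEmbedding e → IsClosed (Set.range e)

/-- infra H-closed: every continuous image in a first-countable Hausdorff
space is closed. -/
def InfraHClosed (X : Type*) [TopologicalSpace X] : Prop :=
  ∀ (Y : Type v) (_ : TopologicalSpace Y), T2Space Y →
    FirstCountableTopology Y → ∀ f : X → Y, Continuous f → IsClosed (Set.range f)

/-- `Y`-compactness: every continuous image in `Y` is compact. -/
def YCompact (X : Type*) [TopologicalSpace X] (Y : Type*) [TopologicalSpace Y] : Prop :=
  ∀ f : X → Y, Continuous f → IsCompact (Set.range f)

/-- scattered: every nonempty subset has a point isolated in it. -/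
def Scattered (X : Type*) [TopologicalSpace X] : Prop :=
  ∀ S : Set X, S.Nonempty → ∃ x ∈ S, ∃ U : Set X, IsOpen U ∧ U ∩ S = {x}

/-- semiregular: there is a base consisting of regular open sets. -/
def Semiregular (X : Type*) [TopologicalSpace X] : Prop :=
  ∃ B : Set (Set X), TopologicalSpace.IsTopologicalBasis B ∧
    ∀ U ∈ B, interior (closure U) = U

/-- countably compact: every countable open cover has a finite subcover. -/
def CountablyCompact (X : Type*) [TopologicalSpace X] : Prop :=
  ∀ 𝒰 : Set (Set X), 𝒰.Countable → (∀ U ∈ 𝒰, IsOpen U) → ⋃₀ 𝒰 = Set.univ →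
    ∃ 𝒱 ⊆ 𝒰, 𝒱.Finite ∧ ⋃₀ 𝒱 = Set.univ

end ISemi
namespace ISemiAux

open ISemi

variable {ι : Type*} {n : ℕ}

/-- the graph of a partial bijection -/
def graph (x : Elem ι n) : Set (ι × ι) := {p | x.1 p.1 = some p.2}

/-- extension order -/
def Ele (x y : Elem ι n) : Prop := graph x ⊆ graph y

lemma Ele.refl (x : Elem ι n) : Ele x x := subset_rfl

lemma Ele.trans {x y z : Elem ι n} (h : Ele x y) (h' : Ele y z) : Ele x z :=
  Set.Subset.trans h h'

lemma graph_inj {x y : Elem ι n} (h : graph x = graph y) : x = y := by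
  apply Subtype.ext
  apply PEquiv.ext
  intro a
  cases hx : x.1 a with
  | none =>
    cases hy : y.1 a with
    | none => rfl
    | some b =>
      have : (a, b) ∈ graph x := by rw [h]; exact hy
      simp only [graph, Set.mem_setOf_eq, hx] at this
      exact absurd this (by simp)
  | some b =>
    have : (a, b) ∈ graph y := by rw [← h]; exact hx
    simp only [graph, Set.mem_setOf_eq] at this
    rw [this]

lemma Ele.antisymm {x y : Elem ι n} (h : Ele x y) (h' : Ele y x) : x = y :=
  graph_inj (Set.Subset.antisymm h h')

/-- domain of a partial bijection -/
def domSet (x : Elem ι n) : Set ι := {a | (x.1 a).isSome}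

lemma domSet_finite (x : Elem ι n) : (domSet x).Finite := by
  have := x.2
  rw [← Set.encard_lt_top_iff]
  exact lt_of_le_of_lt this (WithTop.coe_lt_top n)

lemma graph_finite (x : Elem ι n) : (graph x).Finite := by
  classical
  have hmap : graph x ⊆ (fun a => (a, (x.1 a).getD a)) '' domSet x := by
    rintro ⟨a, b⟩ hab
    refine ⟨a, ?_, ?_⟩
    · simp only [domSet, Set.mem_setOf_eq]
      rw [show x.1 a = some b from hab]; rfl
    · have hx : x.1 a = some b := hab
      simp [hx]
  exact Set.Finite.subset ((domSet_finite x).image _) hmap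

lemma mem_domSet_of_graph {x : Elem ι n} {p : ι × ι} (h : p ∈ graph x) : p.1 ∈ domSet x := by
  simp only [domSet, Set.mem_setOf_eq]
  rw [show x.1 p.1 = some p.2 from h]; rfl

/-- rank -/
noncomputable def rk (x : Elem ι n) : ℕ := (domSet x).ncard

lemma rk_le_n (x : Elem ι n) : rk x ≤ n := by
  have := x.2
  rw [Set.encard_le_coe_iff_finite_ncard_le] at this
  exact this.2

lemma domSet_mono {x y : Elem ι n} (h : Ele x y) : domSet x ⊆ domSet y := by
  intro a ha
  simp only [domSet, Set.mem_setOf_eq] at ha ⊢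
  rcases Option.isSome_iff_exists.1 ha with ⟨b, hb⟩
  have : (a, b) ∈ graph y := h hb
  rw [show y.1 a = some b from this]; rfl

lemma rk_mono {x y : Elem ι n} (h : Ele x y) : rk x ≤ rk y :=
  Set.ncard_le_ncard (domSet_mono h) (domSet_finite y)

lemma eq_of_le_of_rk_le {x y : Elem ι n} (h : Ele x y) (hr : rk y ≤ rk x) : x = y := by
  have hdom : domSet x = domSet y :=
    Set.eq_of_subset_of_ncard_le (domSet_mono h) hr (domSet_finite y)
  apply graph_inj
  refine Set.Subset.antisymm h ?_
  rintro ⟨a, b⟩ hab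
  have ha : a ∈ domSet x := by rw [hdom]; exact mem_domSet_of_graph hab
  rcases Option.isSome_iff_exists.1 ha with ⟨b', hb'⟩
  have hby' : y.1 a = some b' := h (show (a, b') ∈ graph x from hb')
  have hby : y.1 a = some b := hab
  have hbb : b' = b := by
    have := hby'.symm.trans hby
    exact Option.some_injective _ this
  rw [← hbb]
  exact hb'

lemma rk_lt_of_lt {x y : Elem ι n} (h : Ele x y) (hne : x ≠ y) : rk x < rk y := by
  rcases lt_or_ge (rk x) (rk y) with h' | h'
  · exact h'
  · exact absurd (eq_of_le_of_rk_le h h') hne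

end ISemiAux
namespace ISemiAux

open ISemi

variable {ι : Type*} {n : ℕ}

/-- the single pair partial bijection, as an element (needs `0 < n`) -/
noncomputable def atomE (hn : 0 < n) (a b : ι) : Elem ι n :=
  letI := Classical.decEq ι
  ⟨PEquiv.single a b, by
    have : {a' : ι | ((PEquiv.single a b) a').isSome} = {a} := by
      ext a'
      simp only [Set.mem_setOf_eq, Set.mem_singleton_iff]
      constructor
      · intro h
        by_contra hne
        rw [PEquiv.single_apply_of_ne (Ne.symm hne) b] at h
        exact absurd h (by simp)
      · rintro rfl
        rw [PEquiv.single_apply]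
        rfl
    rw [this, Set.encard_singleton]
    exact_mod_cast hn⟩

lemma atomE_apply_self (hn : 0 < n) (a b : ι) :
    (atomE hn a b (ι := ι)).1 a = some b := by
  letI := Classical.decEq ι
  exact PEquiv.single_apply a b

lemma atomE_apply_ne (hn : 0 < n) (a b : ι) {a' : ι} (h : a' ≠ a) :
    (atomE hn a b (ι := ι)).1 a' = none := by
  letI := Classical.decEq ι
  exact PEquiv.single_apply_of_ne (Ne.symm h) b

lemma graph_atomE (hn : 0 < n) (a b : ι) :
    graph (atomE hn a b (ι := ι)) = {(a, b)} := by
  ext ⟨a', b'⟩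
  simp only [graph, Set.mem_setOf_eq, Set.mem_singleton_iff, Prod.mk.injEq]
  by_cases h : a' = a
  · subst h
    rw [atomE_apply_self]
    simp [eq_comm]
  · rw [atomE_apply_ne hn a b h]
    simp [h]

lemma atomE_le_iff (hn : 0 < n) (a b : ι) (x : Elem ι n) :
    Ele (atomE hn a b) x ↔ (a, b) ∈ graph x := by
  rw [Ele, graph_atomE]
  constructor
  · intro h; exact h rfl
  · rintro h p rfl; exact h

/-- restriction of an element to a set of domain points -/
noncomputable def restrictE (z : Elem ι n) (T : Set ι) : Elem ι n :=
  letI : ∀ a : ι, Decidable (a ∈ T) := fun _ => Classical.propDecidable _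
  ⟨⟨fun a => if a ∈ T then z.1 a else none,
    fun b => (z.1.symm b).bind (fun a => if a ∈ T then some a else none), by
    intro a b
    simp only [Option.mem_def, Option.bind_eq_some_iff]
    constructor
    · rintro ⟨a', ha', hif⟩
      by_cases h : a' ∈ T
      · rw [if_pos h] at hif
        rcases Option.some_injective _ hif with rfl
        rw [if_pos h]
        exact (z.1.eq_some_iff).1 ha'
      · rw [if_neg h] at hif
        exact absurd hif (by simp)
    · intro h
      by_cases hT : a ∈ T
      · rw [if_pos hT] at h
        exact ⟨a, (z.1.eq_some_iff).2 h, by rw [if_pos hT]⟩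
      · rw [if_neg hT] at h
        exact absurd h (by simp)⟩, by
    refine le_trans (Set.encard_mono ?_) z.2
    intro a ha
    simp only [Set.mem_setOf_eq] at ha ⊢
    have ha' : (if a ∈ T then z.1 a else none).isSome = true := ha
    by_cases h : a ∈ T
    · rw [if_pos h] at ha'
      exact ha'
    · rw [if_neg h] at ha'
      exact absurd ha' (by simp)⟩

lemma restrictE_apply_mem (z : Elem ι n) {T : Set ι} {a : ι} (h : a ∈ T) :
    (restrictE z T).1 a = z.1 a := by
  letI : ∀ a : ι, Decidable (a ∈ T) := fun _ => Classical.propDecidable _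
  show (if a ∈ T then z.1 a else none) = z.1 a
  rw [if_pos h]

lemma restrictE_apply_not_mem (z : Elem ι n) {T : Set ι} {a : ι} (h : a ∉ T) :
    (restrictE z T).1 a = none := by
  letI : ∀ a : ι, Decidable (a ∈ T) := fun _ => Classical.propDecidable _
  show (if a ∈ T then z.1 a else none) = none
  rw [if_neg h]

lemma graph_restrictE (z : Elem ι n) (T : Set ι) :
    graph (restrictE z T) = {p ∈ graph z | p.1 ∈ T} := by
  ext ⟨a, b⟩
  simp only [graph, Set.mem_setOf_eq]
  by_cases h : a ∈ T
  · rw [restrictE_apply_mem z h]; simp [h]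
  · rw [restrictE_apply_not_mem z h]; simp [h]

/-- the meet of two elements -/
noncomputable def meetE (x y : Elem ι n) : Elem ι n :=
  restrictE x {a | x.1 a = y.1 a}

lemma graph_meetE (x y : Elem ι n) : graph (meetE x y) = graph x ∩ graph y := by
  rw [meetE, graph_restrictE]
  ext ⟨a, b⟩
  simp only [Set.mem_setOf_eq, Set.mem_inter_iff, graph, Set.mem_setOf_eq, Set.sep_setOf]
  constructor
  · rintro ⟨h1, h2⟩
    exact ⟨h1, h2 ▸ h1⟩
  · rintro ⟨h1, h2⟩
    exact ⟨h1, h1.trans h2.symm⟩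

lemma zero_apply (a : ι) : (zero ι n).1 a = none := rfl

lemma graph_zero : graph (zero ι n) = (∅ : Set (ι × ι)) := by
  ext ⟨a, b⟩
  simp only [graph, Set.mem_setOf_eq, zero_apply, Set.mem_empty_iff_false, iff_false]
  simp

lemma atomE_ne_zero (hn : 0 < n) (a b : ι) : atomE hn a b ≠ zero ι n := by
  intro h
  have := graph_atomE hn a b
  rw [h, graph_zero] at this
  exact absurd this.symm (by simp)

lemma mul_apply (x y : Elem ι n) (a : ι) : (x * y).1 a = (x.1 a).bind y.1 := rfl

end ISemiAux
namespace ISemiAux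

open ISemi

variable {ι : Type*} {n : ℕ}

/-- upset -/
def upSet (x : Elem ι n) : Set (Elem ι n) := {y | Ele x y}

lemma mem_upSet_self (x : Elem ι n) : x ∈ upSet x := Ele.refl x

lemma prod_apply (hn : 0 < n) (a b : ι) (x : Elem ι n) (c : ι) :
    (atomE hn a a * x * atomE hn b b).1 c
      = ((((atomE hn a a).1 c).bind x.1).bind (atomE hn b b).1) := by
  rw [mul_apply, mul_apply]

lemma prod_atom_eq_atom (hn : 0 < n) (a b : ι) {x : Elem ι n} (h : x.1 a = some b) :
    atomE hn a a * x * atomE hn b b = atomE hn a b := by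
  apply Subtype.ext
  apply PEquiv.ext
  intro c
  show (atomE hn a a * x * atomE hn b b).1 c = (atomE hn a b).1 c
  rw [prod_apply]
  by_cases hc : c = a
  · subst hc
    rw [atomE_apply_self, atomE_apply_self, Option.bind_some, h, Option.bind_some,
      atomE_apply_self]
  · rw [atomE_apply_ne hn a a hc, atomE_apply_ne hn a b hc, Option.bind_none, Option.bind_none]

lemma prod_atom_eq_zero (hn : 0 < n) (a b : ι) {x : Elem ι n} (h : x.1 a ≠ some b) :
    atomE hn a a * x * atomE hn b b = zero ι n := by
  apply Subtype.ext
  apply PEquiv.ext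
  intro c
  show (atomE hn a a * x * atomE hn b b).1 c = (zero ι n).1 c
  rw [prod_apply, zero_apply]
  by_cases hc : c = a
  · subst hc
    rw [atomE_apply_self, Option.bind_some]
    cases hx : x.1 c with
    | none => rw [Option.bind_none]
    | some d =>
      rw [Option.bind_some]
      have hd : d ≠ b := fun hdb => h (hdb ▸ hx)
      rw [atomE_apply_ne hn b b hd]
  · rw [atomE_apply_ne hn a a hc, Option.bind_none, Option.bind_none]

end ISemiAux
namespace ISemiAux

open ISemi

variable {ι : Type*} {n : ℕ} [TopologicalSpace (Elem ι n)] [T1Space (Elem ι n)]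

set_option linter.unusedSectionVars false

lemma continuous_prod (hn : 0 < n) (hshift : ShiftContinuous ι n) (a b : ι) :
    Continuous (fun x : Elem ι n => atomE hn a a * x * atomE hn b b) := by
  have h1 : Continuous (fun x : Elem ι n => atomE hn a a * x) := (hshift (atomE hn a a)).1
  have h2 : Continuous (fun x : Elem ι n => x * atomE hn b b) := (hshift (atomE hn b b)).2
  exact h2.comp h1

lemma mem_upSet_atom_iff (hn : 0 < n) (a b : ι) (x : Elem ι n) :
    x ∈ upSet (atomE hn a b) ↔ x.1 a = some b := by
  rw [upSet, Set.mem_setOf_eq, atomE_le_iff]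
  rfl

lemma upSet_atom_eq_preimage (hn : 0 < n) (a b : ι) :
    upSet (atomE hn a b (ι := ι) (n := n))
      = (fun x => atomE hn a a * x * atomE hn b b) ⁻¹' {atomE hn a b} := by
  ext x
  rw [mem_upSet_atom_iff, Set.mem_preimage, Set.mem_singleton_iff]
  constructor
  · intro h
    exact prod_atom_eq_atom hn a b h
  · intro h
    by_contra hne
    rw [prod_atom_eq_zero hn a b hne] at h
    exact atomE_ne_zero hn a b h.symm

lemma isClosed_upSet_atom (hn : 0 < n) (hshift : ShiftContinuous ι n) (a b : ι) :
    IsClosed (upSet (atomE hn a b (ι := ι) (n := n))) := by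
  rw [upSet_atom_eq_preimage hn a b]
  exact IsClosed.preimage (continuous_prod hn hshift a b) isClosed_singleton

lemma isOpen_upSet_atom (hn : 0 < n) (hshift : ShiftContinuous ι n) (a b : ι) :
    IsOpen (upSet (atomE hn a b (ι := ι) (n := n))) := by
  have : upSet (atomE hn a b (ι := ι) (n := n))
      = (fun x => atomE hn a a * x * atomE hn b b) ⁻¹' {zero ι n}ᶜ := by
    ext x
    rw [mem_upSet_atom_iff, Set.mem_preimage, Set.mem_compl_iff, Set.mem_singleton_iff]
    constructor
    · intro h
      rw [prod_atom_eq_atom hn a b h]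
      exact atomE_ne_zero hn a b
    · intro h
      by_contra hne
      rw [prod_atom_eq_zero hn a b hne] at h
      exact h rfl
  rw [this]
  exact IsOpen.preimage (continuous_prod hn hshift a b) isOpen_compl_singleton

lemma upSet_eq_biInter (hn : 0 < n) (x : Elem ι n) :
    upSet x = ⋂ p ∈ graph x, upSet (atomE hn p.1 p.2) := by
  ext y
  simp only [Set.mem_iInter]
  constructor
  · intro h p hp
    rw [mem_upSet_atom_iff]
    exact h hp
  · intro h p hp
    have := (mem_upSet_atom_iff hn p.1 p.2 y).1 (h p hp)
    exact this

lemma isOpen_upSet (hn : 0 < n) (hshift : ShiftContinuous ι n) (x : Elem ι n) :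
    IsOpen (upSet x) := by
  rw [upSet_eq_biInter hn x]
  exact Set.Finite.isOpen_biInter (graph_finite x)
    (fun p _ => isOpen_upSet_atom hn hshift p.1 p.2)

lemma isClosed_upSet (hn : 0 < n) (hshift : ShiftContinuous ι n) (x : Elem ι n) :
    IsClosed (upSet x) := by
  rw [upSet_eq_biInter hn x]
  exact isClosed_biInter (fun p _ => isClosed_upSet_atom hn hshift p.1 p.2)

/-- every nonempty open set contains a point isolated in the whole space -/
lemma exists_isolated (hn : 0 < n) (hshift : ShiftContinuous ι n)
    {W : Set (Elem ι n)} (hW : IsOpen W) (hne : W.Nonempty) :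
    ∃ w ∈ W, IsOpen ({w} : Set (Elem ι n)) := by
  have hfin : (rk '' W).Finite := by
    apply Set.Finite.subset (Set.finite_Icc 0 n)
    rintro k ⟨w, _, rfl⟩
    exact ⟨Nat.zero_le _, rk_le_n w⟩
  obtain ⟨k, hkmem, hmax⟩ := Set.exists_max_image (rk '' W) id hfin (hne.image rk)
  obtain ⟨w, hwW, hwk⟩ := hkmem
  refine ⟨w, hwW, ?_⟩
  have : ({w} : Set (Elem ι n)) = upSet w ∩ W := by
    apply Set.Subset.antisymm
    · intro y hy
      rcases hy with rfl
      exact ⟨mem_upSet_self _, hwW⟩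
    · rintro y ⟨hy1, hy2⟩
      have h1 : rk y ≤ rk w := by
        have := hmax (rk y) ⟨y, hy2, rfl⟩
        rw [← hwk] at this
        exact this
      exact Set.mem_singleton_iff.2 (eq_of_le_of_rk_le hy1 h1).symm
  rw [this]
  exact (isOpen_upSet hn hshift w).inter hW

end ISemiAux
namespace ISemiAux

open ISemi

variable {ι : Type*} {n : ℕ} [TopologicalSpace (Elem ι n)] [T1Space (Elem ι n)]

set_option linter.unusedSectionVars false

lemma rooted_le {S : Set (Elem ι n)} {ρ : Elem ι n} (hSinf : S.Infinite)
    (hmeet : ∀ s ∈ S, ∀ s' ∈ S, s ≠ s' → graph s ∩ graph s' = graph ρ) :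
    ∀ s ∈ S, Ele ρ s := by
  intro s hs
  obtain ⟨s', hs'⟩ := (hSinf.diff (Set.finite_singleton s)).nonempty
  have hne : s ≠ s' := fun h => hs'.2 (by rw [← h]; rfl)
  intro p hp
  have := hmeet s hs s' hs'.1 hne
  rw [← this] at hp
  exact hp.1

/-- the root of an infinite family of isolated points with constant pairwise
intersection is a cluster point of the family -/
lemma root_cluster (hn : 0 < n) (hshift : ShiftContinuous ι n)
    (hfc : FeeblyCompact (Elem ι n))
    {S : Set (Elem ι n)} {ρ : Elem ι n} (hSinf : S.Infinite)
    (hiso : ∀ s ∈ S, IsOpen ({s} : Set (Elem ι n)))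
    (hmeet : ∀ s ∈ S, ∀ s' ∈ S, s ≠ s' → graph s ∩ graph s' = graph ρ) :
    ∀ t ∈ 𝓝 ρ, (S ∩ t).Infinite := by
  classical
  set 𝒰 : Set (Set (Elem ι n)) := (fun s => ({s} : Set (Elem ι n))) '' S with h𝒰
  have h𝒰inf : 𝒰.Infinite :=
    hSinf.image (Set.injOn_of_injective (fun a b h => by
      simpa using Set.singleton_eq_singleton_iff.1 h))
  have hopen : ∀ U ∈ 𝒰, IsOpen U ∧ U.Nonempty := by
    rintro U ⟨s, hs, rfl⟩
    exact ⟨hiso s hs, ⟨s, rfl⟩⟩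
  have hnlf : ¬ LocallyFinite (fun U : 𝒰 => (U : Set (Elem ι n))) := by
    intro hlf
    exact h𝒰inf (hfc 𝒰 hopen hlf)
  rw [LocallyFinite] at hnlf
  push_neg at hnlf
  obtain ⟨w, hw⟩ := hnlf
  -- every neighbourhood of w contains infinitely many members of S
  have hkey : ∀ t ∈ 𝓝 w, (S ∩ t).Infinite := by
    intro t ht
    intro hfin
    apply hw t ht
    obtain ⟨s₀, hs₀⟩ := hSinf.nonempty
    have : Set.SurjOn (fun s : Elem ι n =>
        if h : s ∈ S then (⟨{s}, ⟨s, h, rfl⟩⟩ : 𝒰) else ⟨{s₀}, ⟨s₀, hs₀, rfl⟩⟩)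
        (S ∩ t) {i : 𝒰 | ((i : Set (Elem ι n)) ∩ t).Nonempty} := by
      rintro ⟨U, hU⟩ hUt
      obtain ⟨s, hsS, rfl⟩ := hU
      simp only [Set.mem_setOf_eq] at hUt
      obtain ⟨y, hy1, hy2⟩ := hUt
      rcases hy1 with rfl
      refine ⟨y, ⟨hsS, hy2⟩, ?_⟩
      simp [hsS]
    exact Set.Finite.of_surjOn _ this hfin
  -- identify w with ρ
  have hle1 : Ele w ρ := by
    have h1 := hkey (upSet w) ((isOpen_upSet hn hshift w).mem_nhds (mem_upSet_self w))
    obtain ⟨s, hs, s', hs', hne⟩ := h1.nontrivial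
    have hsub : graph w ⊆ graph s ∩ graph s' := fun p hp => ⟨hs.2 hp, hs'.2 hp⟩
    rw [hmeet s hs.1 s' hs'.1 hne] at hsub
    exact hsub
  have hle2 : Ele ρ w := by
    set M : Set (Elem ι n) := upSet w ∩
      ⋂ p ∈ (graph ρ \ graph w), (upSet (atomE hn p.1 p.2))ᶜ with hM
    have hMopen : IsOpen M := by
      apply (isOpen_upSet hn hshift w).inter
      exact Set.Finite.isOpen_biInter ((graph_finite ρ).subset Set.diff_subset)
        (fun p _ => (isClosed_upSet_atom hn hshift p.1 p.2).isOpen_compl)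
    have hwM : w ∈ M := by
      refine ⟨mem_upSet_self w, ?_⟩
      simp only [Set.mem_iInter]
      rintro p ⟨hp1, hp2⟩
      intro hmem
      exact hp2 ((mem_upSet_atom_iff hn p.1 p.2 w).1 hmem)
    obtain ⟨s, hsS, hsM⟩ := (hkey M (hMopen.mem_nhds hwM)).nonempty
    intro p hp
    by_contra hpw
    have hs_in : s ∈ (upSet (atomE hn p.1 p.2))ᶜ := by
      have := hsM.2
      simp only [Set.mem_iInter] at this
      exact this p ⟨hp, hpw⟩
    apply hs_in
    rw [mem_upSet_atom_iff]
    exact rooted_le hSinf hmeet s hsS hp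
  have : w = ρ := Ele.antisymm hle1 hle2
  rw [← this]
  exact hkey

end ISemiAux
namespace ISemiAux

open ISemi

variable {ι : Type*} {n : ℕ} [TopologicalSpace (Elem ι n)] [T1Space (Elem ι n)]

set_option linter.unusedSectionVars false

lemma graph_ssubset {g w : Elem ι n} (hle : Ele g w) (hne : w ≠ g) :
    ∃ p ∈ graph w, p ∉ graph g := by
  by_contra h
  push_neg at h
  exact hne (Ele.antisymm h hle)

/-- the key construction: no infinite family rooted at a point of a regular
open set can live entirely outside of it -/
lemma stream_crux (hn : 0 < n) (hshift : ShiftContinuous ι n)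
    (hfc : FeeblyCompact (Elem ι n))
    {U : Set (Elem ι n)} (hUo : IsOpen U) (hUr : interior (closure U) = U)
    {g : Elem ι n} (hgU : g ∈ U)
    {SS : Set (Elem ι n)} (hSSinf : SS.Infinite)
    (hSSle : ∀ s ∈ SS, Ele g s) (hSSnU : ∀ s ∈ SS, s ∉ U)
    (hSSmeet : ∀ s ∈ SS, ∀ s' ∈ SS, s ≠ s' → graph s ∩ graph s' = graph g) :
    False := by
  classical
  -- fresh isolated points outside the closure of U, above the family, avoiding
  -- any given finite set of fresh pairs
  have hnext : ∀ J : Set (ι × ι), J.Finite → (∀ p ∈ graph g, p ∉ J) →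
      ∃ w : Elem ι n, IsOpen ({w} : Set (Elem ι n)) ∧ w ∈ (closure U)ᶜ ∧
        Ele g w ∧ w ≠ g ∧ ∀ p ∈ J, p ∉ graph w := by
    intro J hJfin hJg
    have hbadfin : {s ∈ SS | ∃ p ∈ J, p ∈ graph s ∧ p ∉ graph g}.Finite := by
      have hsub : {s ∈ SS | ∃ p ∈ J, p ∈ graph s ∧ p ∉ graph g} ⊆
          ⋃ p ∈ J, {s ∈ SS | p ∈ graph s ∧ p ∉ graph g} := by
        rintro s ⟨hs, p, hp, hps, hpg⟩
        exact Set.mem_biUnion hp ⟨hs, hps, hpg⟩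
      refine Set.Finite.subset (Set.Finite.biUnion hJfin (fun p _ => ?_)) hsub
      apply Set.Subsingleton.finite
      rintro s ⟨hs, hps, hpg⟩ s' ⟨hs', hps', _⟩
      by_contra hne
      have := hSSmeet s hs s' hs' hne
      exact hpg (this ▸ ⟨hps, hps'⟩)
    obtain ⟨s₀, hs₀⟩ := (hSSinf.diff hbadfin).nonempty
    have hs₀SS : s₀ ∈ SS := hs₀.1
    set Ω : Set (Elem ι n) := upSet s₀ ∩ ⋂ p ∈ J, (upSet (atomE hn p.1 p.2))ᶜ with hΩ
    have hΩopen : IsOpen Ω := by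
      apply (isOpen_upSet hn hshift s₀).inter
      exact Set.Finite.isOpen_biInter hJfin
        (fun p _ => (isClosed_upSet_atom hn hshift p.1 p.2).isOpen_compl)
    have hs₀Ω : s₀ ∈ Ω := by
      refine ⟨mem_upSet_self s₀, ?_⟩
      simp only [Set.mem_iInter]
      intro p hp
      intro hmem
      have hps₀ : p ∈ graph s₀ := (mem_upSet_atom_iff hn p.1 p.2 s₀).1 hmem
      by_cases hpg : p ∈ graph g
      · exact hJg p hpg hp
      · exact hs₀.2 ⟨hs₀SS, p, hp, hps₀, hpg⟩
    have hΩV : (Ω ∩ (closure U)ᶜ).Nonempty := by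
      by_contra hempty
      rw [Set.not_nonempty_iff_eq_empty] at hempty
      have hsub : Ω ⊆ closure U := by
        intro z hz
        by_contra hz'
        exact absurd (Set.eq_empty_iff_forall_notMem.1 hempty z ⟨hz, hz'⟩) (fun h => h)
      have : s₀ ∈ interior (closure U) := mem_interior.2 ⟨Ω, hsub, hΩopen, hs₀Ω⟩
      rw [hUr] at this
      exact hSSnU s₀ hs₀SS this
    obtain ⟨w, hwmem, hwiso⟩ := exists_isolated hn hshift
      (hΩopen.inter (isClosed_closure.isOpen_compl)) hΩV
    refine ⟨w, hwiso, hwmem.2, (hSSle s₀ hs₀SS).trans hwmem.1.1, ?_, ?_⟩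
    · intro hwg
      apply hwmem.2
      rw [hwg]
      exact subset_closure hgU
    · intro p hp hpw
      have := hwmem.1.2
      simp only [Set.mem_iInter] at this
      exact this p hp ((mem_upSet_atom_iff hn p.1 p.2 w).2 hpw)
  -- Zorn: a maximal family of such isolated points with pairwise intersection g
  set GOOD : Set (Elem ι n) := {w | IsOpen ({w} : Set (Elem ι n)) ∧
      w ∈ (closure U)ᶜ ∧ Ele g w ∧ w ≠ g} with hGOOD
  set 𝒮 : Set (Set (Elem ι n)) := {T | T ⊆ GOOD ∧
      ∀ w ∈ T, ∀ w' ∈ T, w ≠ w' → graph w ∩ graph w' = graph g} with h𝒮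
  obtain ⟨T, hTmax⟩ := zorn_subset 𝒮 (by
    intro c hc hchain
    refine ⟨⋃₀ c, ⟨?_, ?_⟩, fun s hs => Set.subset_sUnion_of_mem hs⟩
    · rintro w ⟨T, hTc, hwT⟩
      exact (hc hTc).1 hwT
    · rintro w ⟨T₁, hT₁, hw₁⟩ w' ⟨T₂, hT₂, hw₂⟩ hne
      rcases eq_or_ne T₁ T₂ with rfl | hT12
      · exact (hc hT₁).2 w hw₁ w' hw₂ hne
      · rcases hchain hT₁ hT₂ hT12 with hsub | hsub
        · exact (hc hT₂).2 w (hsub hw₁) w' hw₂ hne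
        · exact (hc hT₁).2 w hw₁ w' (hsub hw₂) hne)
  have hT𝒮 : T ∈ 𝒮 := hTmax.1
  have hTinf : T.Infinite := by
    intro hTfin
    have hJfin : ((⋃ w ∈ T, graph w) \ graph g).Finite := by
      apply Set.Finite.diff
      exact Set.Finite.biUnion hTfin (fun w _ => graph_finite w)
    obtain ⟨w', hw'iso, hw'V, hw'le, hw'ne, hw'avoid⟩ :=
      hnext _ hJfin (fun p hp hpJ => hpJ.2 hp)
    have hw'GOOD : w' ∈ GOOD := ⟨hw'iso, hw'V, hw'le, hw'ne⟩
    have hw'T : w' ∉ T := by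
      intro hw'T
      obtain ⟨p, hpw', hpg⟩ := graph_ssubset hw'le hw'ne
      exact hw'avoid p ⟨Set.mem_biUnion hw'T hpw', hpg⟩ hpw'
    have hins : insert w' T ∈ 𝒮 := by
      constructor
      · rintro w (rfl | hwT)
        · exact hw'GOOD
        · exact hT𝒮.1 hwT
      · rintro w (rfl | hwT) v (rfl | hvT) hne
        · exact absurd rfl hne
        · -- w = w', v ∈ T
          apply Set.Subset.antisymm
          · rintro p ⟨hpw, hpv⟩
            by_contra hpg
            exact hw'avoid p ⟨Set.mem_biUnion hvT hpv, hpg⟩ hpw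
          · intro p hp
            exact ⟨hw'le hp, (hT𝒮.1 hvT).2.2.1 hp⟩
        · -- w ∈ T, v = w'
          apply Set.Subset.antisymm
          · rintro p ⟨hpw, hpv⟩
            by_contra hpg
            exact hw'avoid p ⟨Set.mem_biUnion hwT hpw, hpg⟩ hpv
          · intro p hp
            exact ⟨(hT𝒮.1 hwT).2.2.1 hp, hw'le hp⟩
        · exact hT𝒮.2 w hwT v hvT hne
    have := hTmax.2 hins (Set.subset_insert w' T)
    exact hw'T (this (Set.mem_insert w' T))
  -- apply the root cluster lemma
  have hcl := root_cluster hn hshift hfc hTinf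
    (fun s hs => (hT𝒮.1 hs).1)
    (fun s hs s' hs' hne => hT𝒮.2 s hs s' hs' hne)
    U (hUo.mem_nhds hgU)
  obtain ⟨z, hzT, hzU⟩ := hcl.nonempty
  exact absurd (subset_closure hzU) (hT𝒮.1 hzT).2.1

end ISemiAux
namespace ISemiAux

/-- infinite Δ-system lemma for families of finite sets of bounded size -/
lemma delta_system {γ : Type*} [DecidableEq γ] (m : ℕ) :
    ∀ (A : ℕ → Finset γ) (I : Set ℕ), I.Infinite → (∀ i ∈ I, (A i).card ≤ m) →
      ∃ I' ⊆ I, I'.Infinite ∧ ∃ R : Finset γ,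
        ∀ i ∈ I', ∀ j ∈ I', i ≠ j → A i ∩ A j = R := by
  induction m with
  | zero =>
    intro A I hI hcard
    refine ⟨I, subset_rfl, hI, ∅, fun i hi j hj _ => ?_⟩
    have : A i = ∅ := Finset.card_eq_zero.1 (Nat.le_zero.1 (hcard i hi))
    rw [this, Finset.empty_inter]
  | succ m ih =>
    intro A I hI hcard
    by_cases h : ∃ a, {i ∈ I | a ∈ A i}.Infinite
    · obtain ⟨a, ha⟩ := h
      set I₁ := {i ∈ I | a ∈ A i} with hI₁
      have hcard' : ∀ i ∈ I₁, ((A i).erase a).card ≤ m := by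
        rintro i ⟨hiI, hia⟩
        rw [Finset.card_erase_of_mem hia]
        have := hcard i hiI
        omega
      obtain ⟨I', hI'sub, hI'inf, R', hR'⟩ := ih (fun i => (A i).erase a) I₁ ha hcard'
      refine ⟨I', fun i hi => (hI'sub hi).1, hI'inf, insert a R', ?_⟩
      intro i hi j hj hne
      have hai : a ∈ A i := (hI'sub hi).2
      have haj : a ∈ A j := (hI'sub hj).2
      ext x
      by_cases hx : x = a
      · subst hx
        simp [hai, haj]
      · rw [Finset.mem_insert]
        simp only [hx, false_or]
        rw [← hR' i hi j hj hne]
        simp [Finset.mem_erase, hx, Finset.mem_inter]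
    · push_neg at h
      set 𝒮 : Set (Set ℕ) := {T | T ⊆ I ∧
          ∀ i ∈ T, ∀ j ∈ T, i ≠ j → A i ∩ A j = ∅} with h𝒮
      obtain ⟨T, hTmax⟩ := zorn_subset 𝒮 (by
        intro c hc hchain
        refine ⟨⋃₀ c, ⟨?_, ?_⟩, fun s hs => Set.subset_sUnion_of_mem hs⟩
        · rintro i ⟨T, hTc, hiT⟩
          exact (hc hTc).1 hiT
        · rintro i ⟨T₁, hT₁, hi₁⟩ j ⟨T₂, hT₂, hj₂⟩ hne
          rcases eq_or_ne T₁ T₂ with rfl | hT12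
          · exact (hc hT₁).2 i hi₁ j hj₂ hne
          · rcases hchain hT₁ hT₂ hT12 with hsub | hsub
            · exact (hc hT₂).2 i (hsub hi₁) j hj₂ hne
            · exact (hc hT₁).2 i hi₁ j (hsub hj₂) hne)
      have hT𝒮 : T ∈ 𝒮 := hTmax.1
      have hTinf : T.Infinite := by
        intro hTfin
        set B : Set γ := ⋃ i ∈ T, (A i : Set γ) with hB
        have hBfin : B.Finite := Set.Finite.biUnion hTfin (fun i _ => (A i).finite_toSet)
        have hbadfin : {i ∈ I | ∃ a ∈ B, a ∈ A i}.Finite := by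
          have hsub : {i ∈ I | ∃ a ∈ B, a ∈ A i} ⊆ ⋃ a ∈ B, {i ∈ I | a ∈ A i} := by
            rintro i ⟨hiI, a, haB, hai⟩
            exact Set.mem_biUnion haB ⟨hiI, hai⟩
          exact Set.Finite.subset (Set.Finite.biUnion hBfin (fun a _ => (h a))) hsub
        obtain ⟨i', hi'⟩ := ((hI.diff hbadfin).diff hTfin).nonempty
        have hi'I : i' ∈ I := hi'.1.1
        have hi'T : i' ∉ T := hi'.2
        have hins : insert i' T ∈ 𝒮 := by
          constructor
          · rintro i (rfl | hiT)
            · exact hi'I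
            · exact hT𝒮.1 hiT
          · have hdisj : ∀ j ∈ T, A i' ∩ A j = ∅ := by
              intro j hjT
              rw [Finset.eq_empty_iff_forall_notMem]
              intro x hx
              rw [Finset.mem_inter] at hx
              exact hi'.1.2 ⟨hi'I, x, Set.mem_biUnion hjT hx.2, hx.1⟩
            rintro i (rfl | hiT) j (rfl | hjT) hne
            · exact absurd rfl hne
            · exact hdisj j hjT
            · rw [Finset.inter_comm]
              exact hdisj i hiT
            · exact hT𝒮.2 i hiT j hjT hne
        have := hTmax.2 hins (Set.subset_insert i' T)
        exact hi'T (this (Set.mem_insert i' T))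
      exact ⟨T, hT𝒮.1, hTinf, ∅, hT𝒮.2⟩

end ISemiAux
namespace ISemiAux

open ISemi

variable {ι : Type*} {n : ℕ} [TopologicalSpace (Elem ι n)] [T1Space (Elem ι n)]

set_option linter.unusedSectionVars false

/-- minimal elements of `↑f \ U` -/
def MinSet (f : Elem ι n) (U : Set (Elem ι n)) : Set (Elem ι n) :=
  {x | Ele f x ∧ x ∉ U ∧ ∀ y, Ele f y → y ∉ U → Ele y x → y = x}

omit [TopologicalSpace (Elem ι n)] [T1Space (Elem ι n)] in
lemma exists_min (f : Elem ι n) (U : Set (Elem ι n)) :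
    ∀ z, Ele f z → z ∉ U → ∃ x ∈ MinSet f U, Ele x z := by
  suffices h : ∀ k z, rk z = k → Ele f z → z ∉ U → ∃ x ∈ MinSet f U, Ele x z by
    intro z
    exact h (rk z) z rfl
  intro k
  induction k using Nat.strong_induction_on with
  | _ k ih =>
    intro z hrk hfz hzU
    by_cases hmin : ∀ y, Ele f y → y ∉ U → Ele y z → y = z
    · exact ⟨z, ⟨hfz, hzU, hmin⟩, Ele.refl z⟩
    · push_neg at hmin
      obtain ⟨y, hfy, hyU, hyz, hyne⟩ := hmin
      have hlt : rk y < k := hrk ▸ rk_lt_of_lt hyz hyne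
      obtain ⟨x, hx, hxy⟩ := ih (rk y) hlt y rfl hfy hyU
      exact ⟨x, hx, hxy.trans hyz⟩

omit [TopologicalSpace (Elem ι n)] [T1Space (Elem ι n)] in
lemma graph_ncard_le (x : Elem ι n) : (graph x).ncard ≤ n := by
  refine le_trans (Set.ncard_le_ncard_of_injOn (fun p => p.1) ?_ ?_ (domSet_finite x))
    (rk_le_n x)
  · intro p hp
    exact mem_domSet_of_graph hp
  · rintro ⟨a, b⟩ hab ⟨a', b'⟩ hab' (h : a = a')
    subst h
    have hb : x.1 a = some b := hab
    have hb' : x.1 a = some b' := hab'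
    rw [hb] at hb'
    rw [Option.some_injective _ hb']

lemma minset_finite (hn : 0 < n) (hshift : ShiftContinuous ι n)
    (hfc : FeeblyCompact (Elem ι n))
    {U : Set (Elem ι n)} (hUo : IsOpen U) (hUr : interior (closure U) = U)
    {f : Elem ι n} (hfU : f ∈ U) :
    (MinSet f U).Finite := by
  classical
  by_contra hinf
  replace hinf : (MinSet f U).Infinite := hinf
  set e := hinf.natEmbedding with he
  set x : ℕ → Elem ι n := fun i => (e i).1 with hx
  have hxinj : Function.Injective x := fun i j hij => e.injective (Subtype.ext hij)
  have hxmin : ∀ i, x i ∈ MinSet f U := fun i => (e i).2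
  set A : ℕ → Finset (ι × ι) := fun i => (graph_finite (x i)).toFinset with hA
  have hAcard : ∀ i ∈ (Set.univ : Set ℕ), (A i).card ≤ n := by
    intro i _
    rw [← Set.ncard_eq_toFinset_card (graph (x i)) (graph_finite (x i))]
    exact graph_ncard_le (x i)
  obtain ⟨I', hI'sub, hI'inf, R, hR⟩ := delta_system n A Set.univ Set.infinite_univ hAcard
  have hgraphA : ∀ i, graph (x i) = ↑(A i) := fun i => (Set.Finite.coe_toFinset _).symm
  obtain ⟨i₀, hi₀, i₁, hi₁, hne01⟩ := hI'inf.nontrivial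
  set K := meetE (x i₀) (x i₁) with hK
  have hgraphK : graph K = ↑R := by
    rw [graph_meetE, hgraphA, hgraphA, ← Finset.coe_inter, hR i₀ hi₀ i₁ hi₁ hne01]
  have hKle : ∀ i ∈ I', Ele K (x i) := by
    intro i hi
    obtain ⟨j, hji⟩ := (hI'inf.diff (Set.finite_singleton i)).nonempty
    have hjne : i ≠ j := fun h => hji.2 (by simp [h.symm])
    rw [Ele, hgraphK, ← hR i hi j hji.1 hjne, hgraphA i]
    intro p hp
    rw [Finset.mem_coe] at hp ⊢
    exact (Finset.mem_inter.1 hp).1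
  have hfK : Ele f K := by
    rw [Ele, hgraphK, ← hR i₀ hi₀ i₁ hi₁ hne01]
    intro p hp
    rw [Finset.mem_coe, Finset.mem_inter]
    constructor
    · have := (hxmin i₀).1 hp
      rw [hgraphA i₀, Finset.mem_coe] at this
      exact this
    · have := (hxmin i₁).1 hp
      rw [hgraphA i₁, Finset.mem_coe] at this
      exact this
  have hKU : K ∈ U := by
    by_contra hKU
    have h0 : K = x i₀ := (hxmin i₀).2.2 K hfK hKU (hKle i₀ hi₀)
    have h1 : Ele (x i₀) (x i₁) := h0 ▸ hKle i₁ hi₁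
    have h2 : x i₀ = x i₁ := (hxmin i₁).2.2 (x i₀) (hxmin i₀).1 (hxmin i₀).2.1 h1
    exact hne01 (hxinj h2)
  -- apply the crux with g := K and the family x '' I'
  apply stream_crux hn hshift hfc hUo hUr hKU
    (SS := x '' I') (hI'inf.image (Set.injOn_of_injective hxinj))
  · rintro s ⟨i, hi, rfl⟩
    exact hKle i hi
  · rintro s ⟨i, _, rfl⟩
    exact (hxmin i).2.1
  · rintro s ⟨i, hi, rfl⟩ s' ⟨j, hj, rfl⟩ hne
    have hij : i ≠ j := fun h => hne (by rw [h])
    rw [hgraphA, hgraphA, hgraphK, ← Finset.coe_inter, hR i hi j hj hij]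

end ISemiAux
namespace ISemiAux

open ISemi

variable {ι : Type*} {n : ℕ} [TopologicalSpace (Elem ι n)] [T1Space (Elem ι n)]

set_option linter.unusedSectionVars false

theorem main_compact (hn : 0 < n) (hshift : ShiftContinuous ι n)
    (hsr : Semiregular (Elem ι n)) (hfc : FeeblyCompact (Elem ι n)) :
    CompactSpace (Elem ι n) := by
  classical
  obtain ⟨B, hbasis, hregB⟩ := hsr
  rw [← isCompact_univ_iff, isCompact_iff_ultrafilter_le_nhds]
  intro F _
  set S : Set (ι × ι) := {p | upSet (atomE hn p.1 p.2) ∈ F} with hS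
  -- S is finite (of size at most n)
  have hSfin : S.Finite := by
    by_contra hSinf
    replace hSinf : S.Infinite := hSinf
    obtain ⟨t, htS, htcard⟩ := hSinf.exists_subset_card_eq (n + 1)
    have hmem : ⋂ p ∈ (↑t : Set (ι × ι)), upSet (atomE hn p.1 p.2) ∈ F := by
      apply (Filter.biInter_mem t.finite_toSet).2
      intro p hp
      exact htS hp
    obtain ⟨z, hz⟩ := Ultrafilter.nonempty_of_mem hmem
    simp only [Set.mem_iInter] at hz
    have hsub : t ⊆ (graph_finite z).toFinset := by
      intro p hp
      rw [Set.Finite.mem_toFinset]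
      exact (mem_upSet_atom_iff hn p.1 p.2 z).1 (hz p hp)
    have := Finset.card_le_card hsub
    rw [htcard, ← Set.ncard_eq_toFinset_card (graph z) (graph_finite z)] at this
    exact absurd (le_trans this (graph_ncard_le z)) (by omega)
  -- a common upper bound element realizing S as a graph
  have hmem : ⋂ p ∈ S, upSet (atomE hn p.1 p.2) ∈ F := by
    apply (Filter.biInter_mem hSfin).2
    intro p hp
    exact hp
  obtain ⟨z, hz⟩ := Ultrafilter.nonempty_of_mem hmem
  simp only [Set.mem_iInter] at hz
  have hzS : ∀ p ∈ S, p ∈ graph z := by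
    intro p hp
    exact (mem_upSet_atom_iff hn p.1 p.2 z).1 (hz p hp)
  set ρ : Elem ι n := restrictE z {a | ∃ b, (a, b) ∈ S} with hρ
  have hgraphρ : graph ρ = S := by
    rw [hρ, graph_restrictE]
    apply Set.Subset.antisymm
    · rintro ⟨a, b⟩ ⟨hpz, b', hb'⟩
      have h1 : z.1 a = some b' := hzS _ hb'
      have h2 : z.1 a = some b := hpz
      rw [h1] at h2
      rcases Option.some_injective _ h2 with rfl
      exact hb'
    · intro p hp
      exact ⟨hzS p hp, p.2, by rcases p with ⟨a, b⟩; exact hp⟩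
  have hupρ : upSet ρ ∈ F := by
    apply Filter.mem_of_superset hmem
    intro w hw
    simp only [Set.mem_iInter] at hw
    intro p hp
    rw [hgraphρ] at hp
    exact (mem_upSet_atom_iff hn p.1 p.2 w).1 (hw p hp)
  refine ⟨ρ, Set.mem_univ ρ, ?_⟩
  intro N hN
  obtain ⟨U, hUB, hρU, hUN⟩ := hbasis.mem_nhds_iff.1 hN
  have hUo : IsOpen U := hbasis.isOpen hUB
  have hUr : interior (closure U) = U := hregB U hUB
  have hMfin : (MinSet ρ U).Finite := minset_finite hn hshift hfc hUo hUr hρU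
  have hcompl : ∀ x ∈ MinSet ρ U, (upSet x)ᶜ ∈ F := by
    intro x hx
    rw [Ultrafilter.compl_mem_iff_notMem]
    intro hxF
    have hne : x ≠ ρ := fun h => hx.2.1 (h ▸ hρU)
    obtain ⟨p, hpx, hpρ⟩ := graph_ssubset hx.1 hne
    have hsup : upSet x ⊆ upSet (atomE hn p.1 p.2) := by
      intro w hw
      rw [mem_upSet_atom_iff]
      exact hw hpx
    have : p ∈ S := Filter.mem_of_superset hxF hsup
    rw [← hgraphρ] at this
    exact hpρ this
  have hFF : upSet ρ ∩ ⋂ x ∈ MinSet ρ U, (upSet x)ᶜ ∈ F :=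
    Filter.inter_mem hupρ ((Filter.biInter_mem hMfin).2 hcompl)
  apply Filter.mem_of_superset hFF
  intro w hw
  apply hUN
  by_contra hwU
  obtain ⟨x, hxM, hxw⟩ := exists_min ρ U w hw.1 hwU
  have := hw.2
  simp only [Set.mem_iInter] at this
  exact this x hxM hxw

end ISemiAux

theorem stmt19 (ι : Type*) [Infinite ι] (n : ℕ) (hn : 0 < n)
    [TopologicalSpace (ISemi.Elem ι n)] [T1Space (ISemi.Elem ι n)]
    (hshift : ISemi.ShiftContinuous ι n)
    (hsr : ISemi.Semiregular (ISemi.Elem ι n))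
    (hfc : ISemi.FeeblyCompact (ISemi.Elem ι n)) :
    CompactSpace (ISemi.Elem ι n) := by
  exact ISemiAux.main_compact hn hshift hsr hfc
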